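/- Let X be a real Banach space, x ∈ S(X), and α, δ > 0. Define d₁(x, δ) = sup over 0 < λ < δ and y ∈ B(X) of (‖x + λy‖ + ‖x − λy‖ − 2)/λ, and d₂(x, α) = diam{f ∈ B(X*) : f(x) > 1 − α}. Then d₂(x, α) ≤ d₁(x, δ) + 2α/δ. -/

import Mathlib

open NormedSpace

/-- Lemma: `d₂(x, α) ≤ d₁(x, δ) + 2α/δ`. -/
theorem stmt_4 {X : Type*} [NormedAddCommGroup X] [NormedSpace ℝ X] [CompleteSpace X]
    (x : X) (hx : ‖x‖ = 1) (α δ : ℝ) (hα : 0 < α) (hδ : 0 < δ) :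
    Metric.diam {f : StrongDual ℝ X | ‖f‖ ≤ 1 ∧ 1 - α < f x} ≤
      sSup {r : ℝ | ∃ lam : ℝ, ∃ y : X, 0 < lam ∧ lam < δ ∧ ‖y‖ ≤ 1 ∧
        r = (‖x + lam • y‖ + ‖x - lam • y‖ - 2) / lam} + 2 * α / δ := by
  set S := {r : ℝ | ∃ lam : ℝ, ∃ y : X, 0 < lam ∧ lam < δ ∧ ‖y‖ ≤ 1 ∧
        r = (‖x + lam • y‖ + ‖x - lam • y‖ - 2) / lam} with hS
  have h0S : (0:ℝ) ∈ S := by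
    refine ⟨δ/2, 0, by positivity, by linarith, by simp, ?_⟩
    rw [smul_zero, add_zero, sub_zero, hx]; ring
  have hbdd : BddAbove S := by
    refine ⟨2, fun r hr => ?_⟩
    obtain ⟨l, y, hl, hlδ, hy, rfl⟩ := hr
    have h1 : ‖x + l • y‖ ≤ 1 + l := by
      calc ‖x + l • y‖ ≤ ‖x‖ + ‖l • y‖ := norm_add_le _ _
        _ ≤ 1 + l := by
          rw [hx, norm_smul, Real.norm_eq_abs, abs_of_pos hl]; nlinarith
    have h2 : ‖x - l • y‖ ≤ 1 + l := by
      calc ‖x - l • y‖ ≤ ‖x‖ + ‖l • y‖ := norm_sub_le _ _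
        _ ≤ 1 + l := by
          rw [hx, norm_smul, Real.norm_eq_abs, abs_of_pos hl]; nlinarith
    rw [div_le_iff₀ hl]
    linarith
  have hSnn : 0 ≤ sSup S := le_csSup hbdd h0S
  have hCnn : 0 ≤ sSup S + 2 * α / δ := by positivity
  apply Metric.diam_le_of_forall_dist_le hCnn
  rintro f ⟨hf1, hf2⟩ g ⟨hg1, hg2⟩
  rw [dist_eq_norm]
  have key : ∀ y : X, ‖y‖ ≤ 1 → (f - g) y ≤ sSup S + 2 * α / δ := by
    intro y hy
    have hstep : ∀ l : ℝ, 0 < l → l < δ → (f - g) y ≤ sSup S + 2 * α / l := by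
      intro l hl hlδ
      have hf3 : f (x + l • y) ≤ ‖x + l • y‖ := by
        calc f (x + l • y) ≤ |f (x + l • y)| := le_abs_self _
          _ = ‖f (x + l • y)‖ := (Real.norm_eq_abs _).symm
          _ ≤ ‖f‖ * ‖x + l • y‖ := f.le_opNorm _
          _ ≤ ‖x + l • y‖ := by nlinarith [norm_nonneg (x + l • y)]
      have hg3 : g (x - l • y) ≤ ‖x - l • y‖ := by
        calc g (x - l • y) ≤ |g (x - l • y)| := le_abs_self _
          _ = ‖g (x - l • y)‖ := (Real.norm_eq_abs _).symm
          _ ≤ ‖g‖ * ‖x - l • y‖ := g.le_opNorm _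
          _ ≤ ‖x - l • y‖ := by nlinarith [norm_nonneg (x - l • y)]
      have e1 : f (x + l • y) = f x + l * f y := by
        rw [map_add, map_smul]; simp
      have e2 : g (x - l • y) = g x - l * g y := by
        rw [map_sub, map_smul]; simp
      have hr : (‖x + l • y‖ + ‖x - l • y‖ - 2) / l ≤ sSup S :=
        le_csSup hbdd ⟨l, y, hl, hlδ, hy, rfl⟩
      have hmul : l * (f y - g y) ≤ (‖x + l • y‖ + ‖x - l • y‖ - 2) + 2 * α := by
        nlinarith
      have h4 : f y - g y ≤ (‖x + l • y‖ + ‖x - l • y‖ - 2) / l + 2 * α / l := by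
        rw [← add_div, le_div_iff₀ hl]
        nlinarith
      simp only [ContinuousLinearMap.sub_apply]
      calc f y - g y ≤ (‖x + l • y‖ + ‖x - l • y‖ - 2) / l + 2 * α / l := h4
        _ ≤ sSup S + 2 * α / l := by linarith
    have hne : (nhdsWithin δ (Set.Ioo 0 δ)).NeBot := right_nhdsWithin_Ioo_neBot hδ
    have htend : Filter.Tendsto (fun l : ℝ => sSup S + 2 * α / l)
        (nhdsWithin δ (Set.Ioo 0 δ)) (nhds (sSup S + 2 * α / δ)) := by
      apply Filter.Tendsto.mono_left _ nhdsWithin_le_nhds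
      exact tendsto_const_nhds.add (tendsto_const_nhds.div Filter.tendsto_id hδ.ne')
    exact ge_of_tendsto htend (Filter.eventually_of_mem self_mem_nhdsWithin
      fun l hl => hstep l hl.1 hl.2)
  refine ContinuousLinearMap.opNorm_le_bound _ hCnn fun z => ?_
  rcases eq_or_ne z 0 with rfl | hz
  · simp
  · have hz' : 0 < ‖z‖ := norm_pos_iff.mpr hz
    have hyn : ‖(‖z‖⁻¹ • z)‖ = 1 := by
      rw [norm_smul, Real.norm_eq_abs, abs_inv, abs_of_pos hz']
      field_simp
    have h1 := key (‖z‖⁻¹ • z) (le_of_eq hyn)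
    have h2 := key (-(‖z‖⁻¹ • z)) (by rw [norm_neg]; exact le_of_eq hyn)
    rw [map_neg] at h2
    have habs : |(f - g) (‖z‖⁻¹ • z)| ≤ sSup S + 2 * α / δ := abs_le.mpr ⟨by linarith, h1⟩
    have heval : (f - g) (‖z‖⁻¹ • z) = ‖z‖⁻¹ * (f - g) z := by
      rw [map_smul]; simp
    rw [heval, abs_mul, abs_inv, abs_of_pos hz'] at habs
    rw [Real.norm_eq_abs]
    calc |(f - g) z| = ‖z‖ * (‖z‖⁻¹ * |(f - g) z|) := by field_simp
      _ ≤ ‖z‖ * (sSup S + 2 * α / δ) := by nlinarith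
      _ = (sSup S + 2 * α / δ) * ‖z‖ := mul_comm _ _
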